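/- Let m ≥ n and let A ∈ ℝ^{m×n} have nonzero columns a_1,…,a_n. Then obliq(A) ≤ off(AᵀA) / min_j ‖a_j‖₂². -/

import Mathlib

open scoped BigOperators
open Matrix

/-- Euclidean norm of a vector in `ℝ^m`. -/
noncomputable def vecNorm {m : ℕ} (v : Fin m → ℝ) : ℝ :=
  Real.sqrt (∑ i, v i ^ 2)

/-- The `k`-th largest singular value of a real `m × n` matrix
(`k = 0` gives the largest). -/
noncomputable def sval {m n : ℕ} (A : Matrix (Fin m) (Fin n) ℝ) (k : Fin n) : ℝ :=
  Real.sqrt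
    (((show (Aᵀ * A).IsHermitian by simpa using Matrix.isHermitian_conjTranspose_mul_self A).eigenvalues ∘
      Tuple.sort (show (Aᵀ * A).IsHermitian by simpa using Matrix.isHermitian_conjTranspose_mul_self A).eigenvalues) k.rev)

/-- Spectral norm: the largest singular value. -/
noncomputable def specNorm {m n : ℕ} (A : Matrix (Fin m) (Fin n) ℝ) : ℝ :=
  ⨆ k, sval A k

/-- Smallest singular value. -/
noncomputable def sMin {m n : ℕ} (A : Matrix (Fin m) (Fin n) ℝ) : ℝ :=
  ⨅ k, sval A k

/-- Frobenius norm. -/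
noncomputable def frobNorm {m n : ℕ} (A : Matrix (Fin m) (Fin n) ℝ) : ℝ :=
  Real.sqrt (∑ i, ∑ j, (A i j) ^ 2)

/-- Frobenius norm of the off-diagonal part of a square matrix. -/
noncomputable def offF {n : ℕ} (M : Matrix (Fin n) (Fin n) ℝ) : ℝ :=
  frobNorm (M - Matrix.diagonal (fun i => M i i))

/-- Diagonal matrix of inverse column norms `D(A)`. -/
noncomputable def colScale {m n : ℕ} (A : Matrix (Fin m) (Fin n) ℝ) :
    Matrix (Fin n) (Fin n) ℝ :=
  Matrix.diagonal (fun j => (vecNorm (fun i => A i j))⁻¹)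

/-- Condition number `κ₂(A) = σ_max(A) / σ_min(A)`. -/
noncomputable def kappa2 {m n : ℕ} (A : Matrix (Fin m) (Fin n) ℝ) : ℝ :=
  specNorm A / sMin A

/-- One-sided scaled condition number `κ₂ᴰ(A) = κ₂(A · D(A))`. -/
noncomputable def scaledCond {m n : ℕ} (A : Matrix (Fin m) (Fin n) ℝ) : ℝ :=
  kappa2 (A * colScale A)

/-- Entrywise absolute value of a matrix. -/
def matAbs {m n : ℕ} (A : Matrix (Fin m) (Fin n) ℝ) : Matrix (Fin m) (Fin n) ℝ :=
  fun i j => |A i j|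

/- ### Auxiliary lemmas -/

lemma vecNorm_nonneg {m : ℕ} (v : Fin m → ℝ) : 0 ≤ vecNorm v := Real.sqrt_nonneg _

lemma vecNorm_sq {m : ℕ} (v : Fin m → ℝ) : vecNorm v ^ 2 = ∑ i, v i ^ 2 :=
  Real.sq_sqrt (by positivity)

lemma vecNorm_sq_eq_dot {m : ℕ} (v : Fin m → ℝ) : vecNorm v ^ 2 = v ⬝ᵥ v := by
  rw [vecNorm_sq]; simp [dotProduct, sq]

lemma vecNorm_le_of_sq_le {m m' : ℕ} {v : Fin m → ℝ} {w : Fin m' → ℝ}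
    (h : vecNorm v ^ 2 ≤ vecNorm w ^ 2) : vecNorm v ≤ vecNorm w := by
  have h2 := Real.sqrt_le_sqrt h
  rwa [Real.sqrt_sq (vecNorm_nonneg v), Real.sqrt_sq (vecNorm_nonneg w)] at h2

lemma vecNorm_eq_of_sq_eq {m m' : ℕ} {v : Fin m → ℝ} {w : Fin m' → ℝ}
    (h : vecNorm v ^ 2 = vecNorm w ^ 2) : vecNorm v = vecNorm w :=
  le_antisymm (vecNorm_le_of_sq_le h.le) (vecNorm_le_of_sq_le h.ge)

lemma vecNorm_pos {m : ℕ} {v : Fin m → ℝ} (hv : v ≠ 0) : 0 < vecNorm v := by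
  rcases (vecNorm_nonneg v).lt_or_eq with h | h
  · exact h
  · exfalso; apply hv
    have h2 : ∑ i, v i ^ 2 = 0 := by
      have := vecNorm_sq v; rw [← this, ← h]; ring
    funext i
    have := (Finset.sum_eq_zero_iff_of_nonneg (fun i _ => sq_nonneg (v i))).1 h2 i
      (Finset.mem_univ i)
    exact pow_eq_zero_iff (by norm_num) |>.1 this

lemma dot_mulVec_self {m n : ℕ} (M : Matrix (Fin m) (Fin n) ℝ) (v : Fin n → ℝ) :
    v ⬝ᵥ ((Mᵀ * M) *ᵥ v) = (M *ᵥ v) ⬝ᵥ (M *ᵥ v) := by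
  rw [← Matrix.mulVec_mulVec, Matrix.dotProduct_mulVec, Matrix.vecMul_transpose]

lemma vecNorm_mulVec_le {m n : ℕ} (M : Matrix (Fin m) (Fin n) ℝ) (v : Fin n → ℝ) :
    vecNorm (M *ᵥ v) ≤ frobNorm M * vecNorm v := by
  have h1 : ∑ i, (M *ᵥ v) i ^ 2 ≤ (∑ i, ∑ j, (M i j)^2) * (∑ j, v j ^2) := by
    rw [Finset.sum_mul]
    refine Finset.sum_le_sum fun i _ => ?_
    simpa [Matrix.mulVec, dotProduct] using
      Finset.sum_mul_sq_le_sq_mul_sq Finset.univ (fun j => M i j) v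
  calc vecNorm (M *ᵥ v) = Real.sqrt (∑ i, (M *ᵥ v) i ^ 2) := rfl
    _ ≤ Real.sqrt ((∑ i, ∑ j, (M i j)^2) * (∑ j, v j ^2)) := Real.sqrt_le_sqrt h1
    _ = frobNorm M * vecNorm v := Real.sqrt_mul (by positivity) _

lemma exists_unit_eigenvector {n : ℕ} {S : Matrix (Fin n) (Fin n) ℝ}
    (hS : S.IsHermitian) (i : Fin n) :
    ∃ v : Fin n → ℝ, vecNorm v = 1 ∧ S *ᵥ v = hS.eigenvalues i • v := by
  refine ⟨(WithLp.equiv 2 _) (hS.eigenvectorBasis i), ?_, hS.mulVec_eigenvectorBasis i⟩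
  have hn : ‖hS.eigenvectorBasis i‖ = 1 := hS.eigenvectorBasis.orthonormal.1 i
  rw [EuclideanSpace.norm_eq] at hn
  simpa [vecNorm, Real.norm_eq_abs, sq_abs] using hn

lemma psd_middle {n : ℕ} (H : Matrix (Fin n) (Fin n) ℝ) (hH : H.PosSemidef) :
    ((H - 1) * (H * H + H + H) * (H - 1)ᵀ).PosSemidef := by
  have hQ : (H * H + H + H).PosSemidef := by
    have h1 : (H * H).PosSemidef := by
      have := Matrix.posSemidef_conjTranspose_mul_self H
      have hHt : Hᵀ = H := by
        rw [← Matrix.conjTranspose_eq_transpose_of_trivial]; exact hH.1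
      rwa [Matrix.conjTranspose_eq_transpose_of_trivial, hHt] at this
    exact (h1.add hH).add hH
  have := hQ.mul_mul_conjTranspose_same (H - 1)
  rwa [Matrix.conjTranspose_eq_transpose_of_trivial] at this

/-- The obliquity is bounded by the relative `off` quantity:
`obliq(A) ≤ off(AᵀA)/min_j ‖a_j‖₂²`. -/
theorem obliquity_le_off
    {m n : ℕ} (hmn : n ≤ m)
    (A : Matrix (Fin m) (Fin n) ℝ)
    (hcols : ∀ j, (fun i => A i j) ≠ 0) :
    ∀ (U : Matrix (Fin m) (Fin n) ℝ) (H : Matrix (Fin n) (Fin n) ℝ),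
      Uᵀ * U = 1 → H.PosSemidef → A * colScale A = U * H →
      specNorm (A * colScale A - U) ≤
        offF (Aᵀ * A) / ⨅ j, (vecNorm (fun i => A i j)) ^ 2 := by
  intro U H hU hH hpolar
  rcases Nat.eq_zero_or_pos n with hn | hn
  · subst hn
    have hL : specNorm (A * colScale A - U) = 0 := by
      rw [specNorm, iSup, Set.range_eq_empty, Real.sSup_empty]
    have hμ0 : (⨅ j : Fin 0, (vecNorm (fun i => A i j)) ^ 2) = 0 := by
      rw [iInf, Set.range_eq_empty, Real.sInf_empty]
    rw [hL, hμ0, div_zero]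
  · haveI : Nonempty (Fin n) := ⟨⟨0, hn⟩⟩
    set μ : ℝ := ⨅ j, (vecNorm (fun i => A i j)) ^ 2 with hμdef
    have hcolpos : ∀ j, 0 < vecNorm (fun i => A i j) := fun j => vecNorm_pos (hcols j)
    have hμpos : 0 < μ := by
      obtain ⟨j, hj⟩ := Finite.exists_min (fun j => (vecNorm (fun i => A i j)) ^ 2)
      calc (0:ℝ) < (vecNorm (fun i => A i j)) ^ 2 := pow_pos (hcolpos j) 2
        _ ≤ μ := le_ciInf hj
    have hμle : ∀ j, μ ≤ (vecNorm (fun i => A i j)) ^ 2 := fun j =>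
      ciInf_le (Finite.bddBelow_range _) j
    have hHt : Hᵀ = H := by
      rw [← Matrix.conjTranspose_eq_transpose_of_trivial]; exact hH.1
    set B : Matrix (Fin m) (Fin n) ℝ := A * colScale A with hBdef
    set K : Matrix (Fin n) (Fin n) ℝ := H * H - 1 with hKdef
    -- B entries
    have hBentry : ∀ i j, B i j = A i j * (vecNorm (fun i => A i j))⁻¹ := by
      intro i j
      rw [hBdef, colScale, Matrix.mul_diagonal]
    -- BᵀB = H * H
    have hBtB : Bᵀ * B = H * H := by
      rw [hpolar, Matrix.transpose_mul, Matrix.mul_assoc, ← Matrix.mul_assoc Uᵀ U H,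
        hU, Matrix.one_mul, hHt]
    -- entries of H*H = BᵀB
    have hHHentry : ∀ i j, (H * H) i j =
        (vecNorm (fun k => A k i))⁻¹ * (vecNorm (fun k => A k j))⁻¹ * ((Aᵀ * A) i j) := by
      intro i j
      rw [← hBtB]
      simp only [Matrix.mul_apply, Matrix.transpose_apply]
      rw [Finset.mul_sum]
      refine Finset.sum_congr rfl fun k _ => ?_
      rw [hBentry k i, hBentry k j]
      ring
    have hdiag : ∀ j, (H * H) j j = 1 := by
      intro j
      rw [hHHentry]
      have hAA : (Aᵀ * A) j j = (vecNorm (fun k => A k j)) ^ 2 := by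
        rw [vecNorm_sq]
        simp [Matrix.mul_apply, sq]
      rw [hAA]
      have h0 : vecNorm (fun k => A k j) ≠ 0 := (hcolpos j).ne'
      field_simp [h0, sq]
    -- Frobenius bound on K
    have hKentry_sq : ∀ i j, (K i j) ^ 2 ≤
        ((Aᵀ * A - Matrix.diagonal (fun i => (Aᵀ * A) i i)) i j) ^ 2 / μ ^ 2 := by
      intro i j
      by_cases hij : i = j
      · subst hij
        have : K i i = 0 := by
          rw [hKdef]
          simp [Matrix.sub_apply, Matrix.one_apply, hdiag i]
        rw [this]
        have hE0 : (Aᵀ * A - Matrix.diagonal fun i => (Aᵀ * A) i i) i i = 0 := by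
          simp [Matrix.sub_apply, Matrix.diagonal_apply_eq]
        rw [hE0]
        norm_num
      · have hK : K i j = (vecNorm (fun k => A k i))⁻¹ * (vecNorm (fun k => A k j))⁻¹ *
            ((Aᵀ * A) i j) := by
          rw [hKdef, Matrix.sub_apply, Matrix.one_apply_ne hij, sub_zero, hHHentry]
        have hE : (Aᵀ * A - Matrix.diagonal (fun i => (Aᵀ * A) i i)) i j = (Aᵀ * A) i j := by
          rw [Matrix.sub_apply, Matrix.diagonal_apply_ne _ hij, sub_zero]
        rw [hK, hE]
        have h1 : μ ^ 2 ≤ (vecNorm (fun k => A k i) * vecNorm (fun k => A k j)) ^ 2 := by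
          rw [mul_pow]
          calc μ ^ 2 = μ * μ := sq μ
            _ ≤ _ := mul_le_mul (hμle i) (hμle j) hμpos.le (by positivity)
        have h2 : ((vecNorm (fun k => A k i) * vecNorm (fun k => A k j)) ^ 2)⁻¹ ≤ (μ ^ 2)⁻¹ :=
          inv_anti₀ (by positivity) h1
        have key : ((vecNorm (fun k => A k i))⁻¹ * (vecNorm (fun k => A k j))⁻¹) ^ 2
            ≤ (μ ^ 2)⁻¹ := by
          calc ((vecNorm (fun k => A k i))⁻¹ * (vecNorm (fun k => A k j))⁻¹) ^ 2
              = ((vecNorm (fun k => A k i) * vecNorm (fun k => A k j)) ^ 2)⁻¹ := by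
                rw [← mul_inv, inv_pow]
            _ ≤ (μ ^ 2)⁻¹ := h2
        calc ((vecNorm (fun k => A k i))⁻¹ * (vecNorm (fun k => A k j))⁻¹ * ((Aᵀ * A) i j)) ^ 2
            = ((vecNorm (fun k => A k i))⁻¹ * (vecNorm (fun k => A k j))⁻¹) ^ 2
              * ((Aᵀ * A) i j) ^ 2 := by ring
          _ ≤ (μ ^ 2)⁻¹ * ((Aᵀ * A) i j) ^ 2 :=
              mul_le_mul_of_nonneg_right key (sq_nonneg _)
          _ = ((Aᵀ * A) i j) ^ 2 / μ ^ 2 := by rw [div_eq_mul_inv]; ring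
    have hfrobK : frobNorm K ≤ offF (Aᵀ * A) / μ := by
      have hsum : ∑ i, ∑ j, (K i j) ^ 2 ≤
          (∑ i, ∑ j, ((Aᵀ * A - Matrix.diagonal (fun i => (Aᵀ * A) i i)) i j) ^ 2) / μ ^ 2 := by
        rw [div_eq_mul_inv, Finset.sum_mul]
        refine Finset.sum_le_sum fun i _ => ?_
        rw [Finset.sum_mul]
        refine Finset.sum_le_sum fun j _ => ?_
        rw [← div_eq_mul_inv]
        exact hKentry_sq i j
      calc frobNorm K = Real.sqrt (∑ i, ∑ j, (K i j) ^ 2) := rfl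
        _ ≤ Real.sqrt ((∑ i, ∑ j,
              ((Aᵀ * A - Matrix.diagonal (fun i => (Aᵀ * A) i i)) i j) ^ 2) / μ ^ 2) :=
            Real.sqrt_le_sqrt hsum
        _ = offF (Aᵀ * A) / μ := by
            rw [Real.sqrt_div (by positivity), Real.sqrt_sq hμpos.le]
            rfl
    -- Spectral part
    set N : Matrix (Fin m) (Fin n) ℝ := B - U with hNdef
    have hUnorm : ∀ w : Fin n → ℝ, vecNorm (U *ᵥ w) = vecNorm w := by
      intro w
      apply vecNorm_eq_of_sq_eq
      rw [vecNorm_sq_eq_dot, vecNorm_sq_eq_dot, ← dot_mulVec_self, hU, Matrix.one_mulVec]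
    have hNmul : ∀ w : Fin n → ℝ, N *ᵥ w = U *ᵥ ((H - 1) *ᵥ w) := by
      intro w
      rw [Matrix.mulVec_mulVec]
      congr 1
      rw [hNdef, hpolar, Matrix.mul_sub, Matrix.mul_one]
    have hW : (H - 1)ᵀ = H - 1 := by rw [Matrix.transpose_sub, hHt, Matrix.transpose_one]
    have hKt : Kᵀ = K := by
      rw [hKdef, Matrix.transpose_sub, Matrix.transpose_mul, hHt, Matrix.transpose_one]
    have hcomp : ∀ w : Fin n → ℝ, vecNorm ((H - 1) *ᵥ w) ≤ vecNorm (K *ᵥ w) := by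
      intro w
      apply vecNorm_le_of_sq_le
      rw [vecNorm_sq_eq_dot, vecNorm_sq_eq_dot, ← dot_mulVec_self, ← dot_mulVec_self,
        hW, hKt]
      have hD : (K * K - (H - 1) * (H - 1)) = (H - 1) * (H * H + H + H) * (H - 1)ᵀ := by
        rw [hW, hKdef]; noncomm_ring
      have hpsd := psd_middle H hH
      rw [← hD] at hpsd
      have h0 := hpsd.dotProduct_mulVec_nonneg w
      have h0' : 0 ≤ w ⬝ᵥ ((K * K - (H - 1) * (H - 1)) *ᵥ w) := by simpa using h0
      rw [Matrix.sub_mulVec, dotProduct_sub, sub_nonneg] at h0'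
      exact h0'
    have hS : (Nᵀ * N).IsHermitian := by simpa using Matrix.isHermitian_conjTranspose_mul_self N
    show (⨆ k, sval N k) ≤ offF (Aᵀ * A) / μ
    refine ciSup_le fun k => ?_
    have hsval : sval N k =
        Real.sqrt (hS.eigenvalues (Tuple.sort hS.eigenvalues k.rev)) := rfl
    set i := Tuple.sort hS.eigenvalues k.rev with hidef
    obtain ⟨v, hv1, hv2⟩ := exists_unit_eigenvector hS i
    have hvv : v ⬝ᵥ v = 1 := by rw [← vecNorm_sq_eq_dot, hv1]; norm_num
    have hlam : vecNorm (N *ᵥ v) ^ 2 = hS.eigenvalues i := by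
      rw [vecNorm_sq_eq_dot, ← dot_mulVec_self, hv2]
      simp [hvv]
    calc sval N k = vecNorm (N *ᵥ v) := by
          rw [hsval, ← hlam, Real.sqrt_sq (vecNorm_nonneg _)]
      _ = vecNorm ((H - 1) *ᵥ v) := by rw [hNmul]; exact hUnorm _
      _ ≤ vecNorm (K *ᵥ v) := hcomp v
      _ ≤ frobNorm K * vecNorm v := vecNorm_mulVec_le K v
      _ = frobNorm K := by rw [hv1, mul_one]
      _ ≤ offF (Aᵀ * A) / μ := hfrobK
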